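/- Let ρ be an n-qubit density matrix and let Λ_ρ be the reset channel on n-qubit matrices defined by Λ_ρ(A) = Tr(A) · ρ. Then D(Λ_ρ†) = 1, where Λ_ρ† is the Hilbert–Schmidt adjoint of Λ_ρ; i.e., every reset channel is simulable by Heisenberg propagation without increasing the number of samples. -/

import Mathlib

open Matrix BigOperators Kronecker ComplexOrder

noncomputable section

/-- The four single-qubit Pauli matrices `I, X, Y, Z`. -/
def pauli1 : Fin 4 → Matrix (Fin 2) (Fin 2) ℂ :=
  ![(1 : Matrix (Fin 2) (Fin 2) ℂ),
    !![0, 1; 1, 0],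
    !![0, -Complex.I; Complex.I, 0],
    !![1, 0; 0, -1]]

/-- The `n`-qubit Pauli matrix `σ_{s 0} ⊗ ⋯ ⊗ σ_{s (n-1)}`, as a matrix on `Fin n → Fin 2`. -/
def nPauli (n : ℕ) (s : Fin n → Fin 4) :
    Matrix (Fin n → Fin 2) (Fin n → Fin 2) ℂ :=
  Matrix.of fun x y => ∏ k : Fin n, pauli1 (s k) (x k) (y k)

/-- The stabilizer norm `D(A) = 2^{-n} Σ_{σ ∈ P_n} |Tr(σ A)|`. -/
def stabNorm {n : ℕ} (A : Matrix (Fin n → Fin 2) (Fin n → Fin 2) ℂ) : ℝ :=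
  ((2 : ℝ) ^ n)⁻¹ * ∑ s : Fin n → Fin 4, ‖(nPauli n s * A).trace‖

/-- The channel stabilizer norm `D(Λ) = max_{σ ∈ P_n} D(Λ(σ))`. -/
def chanNorm {n m : ℕ}
    (Λ : Matrix (Fin n → Fin 2) (Fin n → Fin 2) ℂ →ₗ[ℂ]
         Matrix (Fin m → Fin 2) (Fin m → Fin 2) ℂ) : ℝ :=
  ⨆ s : Fin n → Fin 4, stabNorm (Λ (nPauli n s))

lemma pauli1_conjTranspose (i : Fin 4) : (pauli1 i)ᴴ = pauli1 i := by
  fin_cases i <;> ext x y <;> fin_cases x <;> fin_cases y <;>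
    simp [pauli1, conjTranspose_apply, Complex.ext_iff]

lemma pauli1_mul_self (i : Fin 4) : pauli1 i * pauli1 i = 1 := by
  fin_cases i <;> ext x y <;> fin_cases x <;> fin_cases y <;>
    simp [pauli1, Matrix.mul_apply, Fin.sum_univ_two, Complex.ext_iff, Matrix.one_apply]

lemma pauli1_trace (i : Fin 4) : (pauli1 i).trace = if i = 0 then 2 else 0 := by
  fin_cases i <;> simp [pauli1, Matrix.trace, Matrix.diag, Fin.sum_univ_two]

lemma prod_one_apply {n : ℕ} (x y : Fin n → Fin 2) :
    (∏ k : Fin n, (1 : Matrix (Fin 2) (Fin 2) ℂ) (x k) (y k)) =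
      (1 : Matrix (Fin n → Fin 2) (Fin n → Fin 2) ℂ) x y := by
  by_cases h : x = y
  · subst h; simp [Matrix.one_apply]
  · rw [Matrix.one_apply_ne h]
    obtain ⟨k, hk⟩ : ∃ k, x k ≠ y k := by
      by_contra hc
      push_neg at hc
      exact h (funext hc)
    exact Finset.prod_eq_zero (Finset.mem_univ k) (Matrix.one_apply_ne hk)

lemma nPauli_mul_self {n : ℕ} (s : Fin n → Fin 4) : nPauli n s * nPauli n s = 1 := by
  ext x y
  rw [Matrix.mul_apply]
  simp only [nPauli, Matrix.of_apply]
  calc ∑ z : Fin n → Fin 2, (∏ k, pauli1 (s k) (x k) (z k)) * ∏ k, pauli1 (s k) (z k) (y k)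
      = ∑ z : Fin n → Fin 2, ∏ k, (pauli1 (s k) (x k) (z k) * pauli1 (s k) (z k) (y k)) := by
        simp [Finset.prod_mul_distrib]
    _ = ∏ k, ∑ j : Fin 2, pauli1 (s k) (x k) j * pauli1 (s k) j (y k) := by
        rw [Finset.prod_univ_sum]
        simp [Fintype.piFinset_univ]
    _ = ∏ k, (pauli1 (s k) * pauli1 (s k)) (x k) (y k) := by
        simp [Matrix.mul_apply]
    _ = (1 : Matrix (Fin n → Fin 2) (Fin n → Fin 2) ℂ) x y := by
        simp only [pauli1_mul_self]; exact prod_one_apply x y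

lemma nPauli_hermitian {n : ℕ} (s : Fin n → Fin 4) : (nPauli n s).IsHermitian := by
  ext x y
  simp only [conjTranspose_apply, nPauli, Matrix.of_apply, star_prod]
  congr 1
  ext k
  have := congrArg (fun M => M (x k) (y k)) (pauli1_conjTranspose (s k))
  simpa [conjTranspose_apply] using this

lemma nPauli_trace {n : ℕ} (s : Fin n → Fin 4) :
    (nPauli n s).trace = if s = 0 then (2 : ℂ) ^ n else 0 := by
  have : (nPauli n s).trace = ∏ k, (pauli1 (s k)).trace := by
    simp only [Matrix.trace, Matrix.diag, nPauli, Matrix.of_apply]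
    rw [Finset.prod_univ_sum]
    simp [Fintype.piFinset_univ]
  rw [this]
  simp only [pauli1_trace]
  by_cases h : s = 0
  · subst h; simp
  · rw [if_neg h]
    obtain ⟨k, hk⟩ : ∃ k, s k ≠ 0 := by
      by_contra hc; push_neg at hc; exact h (funext hc)
    exact Finset.prod_eq_zero (Finset.mem_univ k) (by simp [hk])

lemma nPauli_zero (n : ℕ) : nPauli n 0 = 1 := by
  ext x y
  simp only [nPauli, Matrix.of_apply, Pi.zero_apply]
  have : ∀ k : Fin n, pauli1 0 (x k) (y k) = (1 : Matrix (Fin 2) (Fin 2) ℂ) (x k) (y k) := by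
    intro k; rfl
  simp only [this]
  exact prod_one_apply x y

-- PSD trace nonneg
lemma psd_trace_nonneg {m : Type*} [Fintype m] [DecidableEq m]
    {M : Matrix m m ℂ} (hM : M.PosSemidef) : 0 ≤ M.trace := by
  exact hM.trace_nonneg

lemma trace_mul_psd_nonneg {m : Type*} [Fintype m] [DecidableEq m]
    {P Q : Matrix m m ℂ} (hP : P.PosSemidef) (hQ : Q.PosSemidef) :
    0 ≤ (P * Q).trace := by
  open scoped MatrixOrder Matrix.Norms.L2Operator in
  obtain ⟨B, rfl⟩ := CStarAlgebra.nonneg_iff_eq_star_mul_self.mp hP.nonneg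
  rw [star_eq_conjTranspose, mul_assoc, Matrix.trace_mul_comm, mul_assoc, ← mul_assoc]
  exact psd_trace_nonneg (hQ.mul_mul_conjTranspose_same B)

lemma psd_one_add {m : Type*} [Fintype m] [DecidableEq m]
    {σ : Matrix m m ℂ} (h1 : σ.IsHermitian) (h2 : σ * σ = 1) :
    (1 + σ).PosSemidef := by
  refine .of_dotProduct_mulVec_nonneg (by simp [IsHermitian, conjTranspose_add, h1.eq]) fun x => ?_
  have key : (1 + σ)ᴴ * (1 + σ) = (2 : ℂ) • (1 + σ) := by
    rw [conjTranspose_add, conjTranspose_one, h1.eq]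
    have e : (1 + σ) * (1 + σ) = σ * σ + (2 : ℂ) • σ + 1 := by noncomm_ring; simp [← Nat.cast_smul_eq_nsmul ℂ]; rw [two_mul, two_smul]; abel
    rw [e, h2]
    module
  have h3 := (Matrix.posSemidef_conjTranspose_mul_self (1 + σ)).dotProduct_mulVec_nonneg x
  rw [key] at h3
  rw [Matrix.smul_mulVec, dotProduct_smul] at h3
  have h4 : (0:ℂ) ≤ (2:ℂ)⁻¹ * ((2:ℂ) • dotProduct (star x) ((1 + σ) *ᵥ x)) :=
    mul_nonneg (by norm_num [Complex.le_def]) h3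
  rw [smul_eq_mul, ← mul_assoc] at h4
  norm_num at h4
  exact h4

lemma psd_one_sub {m : Type*} [Fintype m] [DecidableEq m]
    {σ : Matrix m m ℂ} (h1 : σ.IsHermitian) (h2 : σ * σ = 1) :
    (1 - σ).PosSemidef := by
  have h1' : (-σ).IsHermitian := h1.neg
  have h2' : (-σ) * (-σ) = 1 := by rw [neg_mul_neg, h2]
  have := psd_one_add h1' h2'
  rwa [← sub_eq_add_neg] at this

lemma abs_trace_mul_le_one {m : Type*} [Fintype m] [DecidableEq m]
    {σ ρ : Matrix m m ℂ} (h1 : σ.IsHermitian) (h2 : σ * σ = 1)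
    (hρ : ρ.PosSemidef) (htr : ρ.trace = 1) :
    ‖(σ * ρ).trace‖ ≤ 1 := by
  have ha : 0 ≤ ((1 + σ) * ρ).trace := trace_mul_psd_nonneg (psd_one_add h1 h2) hρ
  have hb : 0 ≤ ((1 - σ) * ρ).trace := trace_mul_psd_nonneg (psd_one_sub h1 h2) hρ
  set a := ((1 + σ) * ρ).trace with hadef
  set b := ((1 - σ) * ρ).trace with hbdef
  have hsum : a + b = 2 := by
    rw [hadef, hbdef, ← Matrix.trace_add, ← add_mul]
    norm_num [htr, two_mul]
  have hdiff : a - b = 2 * (σ * ρ).trace := by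
    rw [hadef, hbdef, ← Matrix.trace_sub, ← sub_mul]
    have : (1 + σ) - (1 - σ) = (2:ℂ) • σ := by module
    rw [this, Matrix.smul_mul, Matrix.trace_smul, smul_eq_mul]
  rw [Complex.le_def] at ha hb
  simp only [Complex.zero_re, Complex.zero_im] at ha hb
  have him : ((σ * ρ).trace).im = 0 := by
    have h := congrArg Complex.im hdiff
    rw [Complex.sub_im, ← ha.2, ← hb.2] at h
    simp [Complex.mul_im] at h
    linarith
  have hre : |((σ * ρ).trace).re| ≤ 1 := by
    have h1' := congrArg Complex.re hdiff
    have h2' := congrArg Complex.re hsum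
    simp [Complex.add_re, Complex.sub_re, Complex.mul_re, him] at h1' h2'
    rw [abs_le]
    constructor <;> nlinarith [ha.1, hb.1]
  calc ‖(σ * ρ).trace‖ = |((σ * ρ).trace).re| :=
        (Complex.abs_re_eq_norm.2 him).symm
    _ ≤ 1 := hre

private theorem chanNorm_reset_adjoint' (n : ℕ) (hn : 1 ≤ n)
    (ρ : Matrix (Fin n → Fin 2) (Fin n → Fin 2) ℂ)
    (hpsd : ρ.PosSemidef) (htr : ρ.trace = 1)
    (Λ Λd : Matrix (Fin n → Fin 2) (Fin n → Fin 2) ℂ →ₗ[ℂ]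
            Matrix (Fin n → Fin 2) (Fin n → Fin 2) ℂ)
    (hΛ : ∀ A : Matrix (Fin n → Fin 2) (Fin n → Fin 2) ℂ, Λ A = A.trace • ρ)
    (hadj : ∀ A B : Matrix (Fin n → Fin 2) (Fin n → Fin 2) ℂ,
      (A * Λ B).trace = (Λd A * B).trace) :
    (⨆ s : Fin n → Fin 4, ((2 : ℝ) ^ n)⁻¹ *
      ∑ t : Fin n → Fin 4, ‖(nPauli n t * Λd (nPauli n s)).trace‖) = 1 := by
  have hΛd : ∀ A, Λd A = (A * ρ).trace • (1 : Matrix (Fin n → Fin 2) (Fin n → Fin 2) ℂ) := by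
    intro A
    ext i j
    have h := hadj A (Matrix.single j i 1)
    rw [hΛ] at h
    have e1 : (Matrix.single j i (1:ℂ)).trace = if i = j then 1 else 0 := by
      simp only [Matrix.trace, Matrix.diag, Matrix.single, Matrix.of_apply, ite_and,
        Finset.sum_ite_eq, Finset.mem_univ, if_true]
    have e2 : (Λd A * Matrix.single j i (1:ℂ)).trace = Λd A i j := by
      simp only [Matrix.trace, Matrix.diag, Matrix.mul_apply, Matrix.single,
        Matrix.of_apply, mul_ite, mul_one, mul_zero, ite_and, Finset.sum_ite_eq,
        Finset.mem_univ, if_true]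
    rw [e2] at h
    rw [Matrix.smul_apply, Matrix.one_apply]
    rw [Matrix.mul_smul, Matrix.trace_smul, e1] at h
    rw [← h, smul_eq_mul]
    by_cases hij : i = j <;> simp [hij, mul_comm]
  have key : ∀ s : Fin n → Fin 4,
      ((2 : ℝ) ^ n)⁻¹ * ∑ t : Fin n → Fin 4,
        ‖(nPauli n t * Λd (nPauli n s)).trace‖
      = ‖(nPauli n s * ρ).trace‖ := by
    intro s
    have h1 : ∀ t : Fin n → Fin 4,
        ‖(nPauli n t * Λd (nPauli n s)).trace‖ =
        ‖(nPauli n s * ρ).trace‖ * ‖(nPauli n t).trace‖ := by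
      intro t
      rw [hΛd, Matrix.mul_smul, Matrix.trace_smul, mul_one, smul_eq_mul,
        norm_mul]
    simp_rw [h1, nPauli_trace]
    rw [← Finset.mul_sum]
    have h2 : ∀ t : Fin n → Fin 4,
        ‖if t = 0 then (2:ℂ)^n else 0‖ = if t = 0 then (2:ℝ)^n else 0 := by
      intro t; split <;> simp
    simp_rw [h2]
    rw [Finset.sum_ite_eq' Finset.univ (0 : Fin n → Fin 4) (fun _ => (2:ℝ)^n)]
    simp only [Finset.mem_univ, if_true]
    have h3 : ((2:ℝ)^n) ≠ 0 := by positivity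
    field_simp
  simp_rw [key]
  have hb : BddAbove (Set.range fun s : Fin n → Fin 4 =>
      ‖(nPauli n s * ρ).trace‖) := by
    refine ⟨1, ?_⟩
    rintro y ⟨s, rfl⟩
    exact abs_trace_mul_le_one (nPauli_hermitian s) (nPauli_mul_self s) hpsd htr
  apply le_antisymm
  · apply ciSup_le
    intro s
    exact abs_trace_mul_le_one (nPauli_hermitian s) (nPauli_mul_self s) hpsd htr
  · have h0 : ‖(nPauli n 0 * ρ).trace‖ = 1 := by
      rw [nPauli_zero, one_mul, htr, norm_one]
    calc (1:ℝ) = ‖(nPauli n 0 * ρ).trace‖ := h0.symm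
      _ ≤ ⨆ s, ‖(nPauli n s * ρ).trace‖ := le_ciSup hb 0

/-- For a reset channel `Λ_ρ(A) = Tr(A) ρ` with `ρ` a density matrix, the
Hilbert–Schmidt adjoint satisfies `D(Λ_ρ†) = 1`. -/
theorem chanNorm_reset_adjoint (n : ℕ) (hn : 1 ≤ n)
    (ρ : Matrix (Fin n → Fin 2) (Fin n → Fin 2) ℂ)
    (hpsd : ρ.PosSemidef) (htr : ρ.trace = 1)
    (Λ Λd : Matrix (Fin n → Fin 2) (Fin n → Fin 2) ℂ →ₗ[ℂ]
            Matrix (Fin n → Fin 2) (Fin n → Fin 2) ℂ)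
    (hΛ : ∀ A : Matrix (Fin n → Fin 2) (Fin n → Fin 2) ℂ, Λ A = A.trace • ρ)
    (hadj : ∀ A B : Matrix (Fin n → Fin 2) (Fin n → Fin 2) ℂ,
      (A * Λ B).trace = (Λd A * B).trace) :
    chanNorm Λd = 1 := by
  have h := chanNorm_reset_adjoint' n hn ρ hpsd htr Λ Λd hΛ hadj
  unfold chanNorm stabNorm
  exact h
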